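/- Let p be a prime, ζ a primitive p-th root of unity in ℚ(ζ_p), R = ℤ[ζ] the subring generated by ζ, and let ev : ℤ[X]/(Xᵖ − 1) → R be the ring homomorphism induced by evaluation at ζ (well-defined since ζᵖ = 1). Then for every unit v of R, the (p−1)-st power v^{p−1} lies in the image of the unit group of ℤ[X]/(Xᵖ − 1) under ev; that is, there is a unit w of ℤ[X]/(Xᵖ − 1) with ev(w) = v^{p−1}. ("The (p−1)st power of any unit in ℤ[ζ] comes from a unit in ℤ[ℤ_p]", a consequence of the pullback square for the group ring ℤ[ℤ_p] ≅ ℤ[X]/(Xᵖ−1).) -/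

import Mathlib

open Polynomial in
/-- Let `p` be a prime, `ζ` a primitive `p`-th root of unity in `ℚ(ζ_p)`,
`R = ℤ[ζ]` the subring generated by `ζ`, and `ev : ℤ[X]/(Xᵖ − 1) → R` the
ring homomorphism induced by evaluation at `ζ` (i.e. sending the class of `X`
to `ζ`). Then for every unit `v` of `R` the `(p−1)`-st power `v^(p−1)` lies in
the image of the unit group of `ℤ[X]/(Xᵖ − 1)` under `ev`. -/
theorem stmt10 (p : ℕ+) (hp : (p : ℕ).Prime) (ζ : CyclotomicField p ℚ)
    (hζ : IsPrimitiveRoot ζ (p : ℕ))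
    (ev : (Polynomial ℤ ⧸ Ideal.span ({X ^ (p : ℕ) - 1} : Set (Polynomial ℤ))) →+*
      Algebra.adjoin ℤ ({ζ} : Set (CyclotomicField p ℚ)))
    (hev : ev (Ideal.Quotient.mk _ X) = ⟨ζ, Algebra.self_mem_adjoin_singleton ℤ ζ⟩) :
    ∀ v : (Algebra.adjoin ℤ ({ζ} : Set (CyclotomicField p ℚ)))ˣ,
      ∃ w : (Polynomial ℤ ⧸ Ideal.span ({X ^ (p : ℕ) - 1} : Set (Polynomial ℤ)))ˣ,
        ev w = (v : Algebra.adjoin ℤ ({ζ} : Set (CyclotomicField p ℚ))) ^ ((p : ℕ) - 1) := by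
  classical
  haveI : Fact (p : ℕ).Prime := ⟨hp⟩
  intro v
  -- the composite `ev ∘ mk` is evaluation at ζ
  have key : ∀ f : Polynomial ℤ,
      ((ev (Ideal.Quotient.mk _ f) : Algebra.adjoin ℤ ({ζ} : Set (CyclotomicField p ℚ))) :
        CyclotomicField p ℚ) = aeval ζ f := by
    have hhom : ((Algebra.adjoin ℤ ({ζ} : Set (CyclotomicField p ℚ))).val.toRingHom.comp
          (ev.comp (Ideal.Quotient.mk _)))
        = (aeval ζ : Polynomial ℤ →ₐ[ℤ] CyclotomicField p ℚ).toRingHom := by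
      apply Polynomial.ringHom_ext
      · intro a
        rw [eq_intCast (C : ℤ →+* Polynomial ℤ) a, map_intCast, map_intCast]
      · simp [hev]
    intro f
    exact RingHom.congr_fun hhom f
  -- ζ is a root of `cyclotomic p ℤ` (via `aeval`)
  have haevalcyc : aeval ζ (cyclotomic (p : ℕ) ℤ) = 0 := by
    simpa [aeval_def, eval₂_eq_eval_map, map_cyclotomic, IsRoot.def]
      using hζ.isRoot_cyclotomic p.pos
  -- represent v and v⁻¹ by polynomials
  have hv : ((v : Algebra.adjoin ℤ ({ζ} : Set (CyclotomicField p ℚ))) : CyclotomicField p ℚ)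
      ∈ Algebra.adjoin ℤ ({ζ} : Set (CyclotomicField p ℚ)) := SetLike.coe_mem _
  have hv' : (((v⁻¹ : _ˣ) : Algebra.adjoin ℤ ({ζ} : Set (CyclotomicField p ℚ))) :
      CyclotomicField p ℚ) ∈ Algebra.adjoin ℤ ({ζ} : Set (CyclotomicField p ℚ)) := SetLike.coe_mem _
  have hv2 : ((v : Algebra.adjoin ℤ ({ζ} : Set (CyclotomicField p ℚ))) : CyclotomicField p ℚ)
      ∈ (aeval ζ : Polynomial ℤ →ₐ[ℤ] CyclotomicField p ℚ).range := by
    rw [← Algebra.adjoin_singleton_eq_range_aeval]; exact hv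
  have hv2' : (((v⁻¹ : _ˣ) : Algebra.adjoin ℤ ({ζ} : Set (CyclotomicField p ℚ))) :
      CyclotomicField p ℚ) ∈ (aeval ζ : Polynomial ℤ →ₐ[ℤ] CyclotomicField p ℚ).range := by
    rw [← Algebra.adjoin_singleton_eq_range_aeval]; exact hv'
  obtain ⟨f, hf0⟩ := hv2
  obtain ⟨f', hf0'⟩ := hv2'
  have hf : aeval ζ f = ((v : Algebra.adjoin ℤ ({ζ} : Set (CyclotomicField p ℚ))) :
    CyclotomicField p ℚ) := hf0
  have hf' : aeval ζ f' = (((v⁻¹ : _ˣ) : Algebra.adjoin ℤ ({ζ} : Set (CyclotomicField p ℚ))) :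
    CyclotomicField p ℚ) := hf0'
  have hmin : cyclotomic (p : ℕ) ℤ = minpoly ℤ ζ := cyclotomic_eq_minpoly hζ p.pos
  have hvv' : ((v : Algebra.adjoin ℤ ({ζ} : Set (CyclotomicField p ℚ))) : CyclotomicField p ℚ) *
      (((v⁻¹ : _ˣ) : Algebra.adjoin ℤ ({ζ} : Set (CyclotomicField p ℚ))) : CyclotomicField p ℚ)
      = 1 := by
    rw [← Subalgebra.coe_mul, Units.mul_inv]
    rfl
  have hdvd1 : cyclotomic (p : ℕ) ℤ ∣ f * f' - 1 := by
    rw [hmin]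
    apply minpoly.isIntegrallyClosed_dvd (hζ.isIntegral p.pos)
    simp [hf, hf', hvv', sub_eq_zero]
    convert hvv' using 2
    · exact hf
    · exact hf'
  -- hence `p ∣ f(1) * f'(1) - 1`
  have hpd : (p : ℤ) ∣ f.eval 1 * f'.eval 1 - 1 := by
    obtain ⟨q, hq⟩ := hdvd1
    refine ⟨q.eval 1, ?_⟩
    have := congrArg (Polynomial.eval (1 : ℤ)) hq
    simpa [eval_one_cyclotomic_prime] using this
  -- Fermat's little theorem
  have fermat : ∀ a b : ℤ, (p : ℤ) ∣ a * b - 1 → (p : ℤ) ∣ a ^ ((p : ℕ) - 1) - 1 := by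
    intro a b hab
    have ha : (a : ZMod (p : ℕ)) ≠ 0 := by
      intro h0
      have h1 : ((a : ZMod (p : ℕ)) * (b : ZMod (p : ℕ)) - 1 : ZMod (p : ℕ)) = 0 := by
        have := (ZMod.intCast_zmod_eq_zero_iff_dvd (a * b - 1) (p : ℕ)).2 (by exact_mod_cast hab)
        push_cast at this
        exact this
      rw [h0] at h1
      simp at h1
    have hfe := ZMod.pow_card_sub_one_eq_one ha
    have h2 : ((a ^ ((p : ℕ) - 1) - 1 : ℤ) : ZMod (p : ℕ)) = 0 := by
      push_cast
      rw [hfe]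
      ring
    exact_mod_cast (ZMod.intCast_zmod_eq_zero_iff_dvd _ _).1 h2
  obtain ⟨c, hc⟩ := fermat _ _ hpd
  obtain ⟨c', hc'⟩ := fermat _ _ (by rwa [mul_comm] at hpd)
  -- the adjusted polynomials
  set g : Polynomial ℤ := f ^ ((p : ℕ) - 1) - C c * cyclotomic (p : ℕ) ℤ with hg
  set h : Polynomial ℤ := f' ^ ((p : ℕ) - 1) - C c' * cyclotomic (p : ℕ) ℤ with hh
  have hg1 : g.eval 1 = 1 := by
    simp only [hg, eval_sub, eval_mul, eval_C, eval_pow, eval_one, eval_one_cyclotomic_prime]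
    linear_combination hc
  have hh1 : h.eval 1 = 1 := by
    simp only [hh, eval_sub, eval_mul, eval_C, eval_pow, eval_one, eval_one_cyclotomic_prime]
    linear_combination hc'
  have hgζ : aeval ζ g =
      ((v : Algebra.adjoin ℤ ({ζ} : Set (CyclotomicField p ℚ))) : CyclotomicField p ℚ)
        ^ ((p : ℕ) - 1) := by
    simp [hg, haevalcyc, hf]
  have hhζ : aeval ζ h =
      (((v⁻¹ : _ˣ) : Algebra.adjoin ℤ ({ζ} : Set (CyclotomicField p ℚ))) : CyclotomicField p ℚ)
        ^ ((p : ℕ) - 1) := by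
    simp [hh, haevalcyc, hf']
  -- `X^p - 1` divides `g * h - 1`
  have hdvd2 : cyclotomic (p : ℕ) ℤ ∣ g * h - 1 := by
    rw [hmin]
    apply minpoly.isIntegrallyClosed_dvd (hζ.isIntegral p.pos)
    have hone : ((v : Algebra.adjoin ℤ ({ζ} : Set (CyclotomicField p ℚ))) : CyclotomicField p ℚ)
          ^ ((p : ℕ) - 1) *
        (((v⁻¹ : _ˣ) : Algebra.adjoin ℤ ({ζ} : Set (CyclotomicField p ℚ))) : CyclotomicField p ℚ)
          ^ ((p : ℕ) - 1) = 1 := by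
      rw [← mul_pow, hvv', one_pow]
    simp [hgζ, hhζ, hone]
    rw [sub_eq_zero]
    convert hone using 2
    · exact hgζ
    · exact hhζ
  obtain ⟨q, hq⟩ := hdvd2
  have hq1 : q.eval 1 = 0 := by
    have h0 : (0 : ℤ) = (p : ℤ) * q.eval 1 := by
      simpa [hg1, hh1, eval_one_cyclotomic_prime] using congrArg (Polynomial.eval (1 : ℤ)) hq
    have hp0 : ((p : ℕ) : ℤ) ≠ 0 := by exact_mod_cast hp.ne_zero
    exact (mul_eq_zero.mp h0.symm).resolve_left hp0
  have hXq : (X - 1 : Polynomial ℤ) ∣ q := by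
    have : (X - C (1 : ℤ)) ∣ q := (dvd_iff_isRoot).2 hq1
    simpa using this
  obtain ⟨r, hr⟩ := hXq
  have hdvd3 : (X ^ (p : ℕ) - 1 : Polynomial ℤ) ∣ g * h - 1 := by
    refine ⟨r, ?_⟩
    rw [hq, hr, ← cyclotomic_prime_mul_X_sub_one ℤ (p : ℕ)]
    ring
  -- build the unit
  have hmul : (Ideal.Quotient.mk (Ideal.span ({X ^ (p : ℕ) - 1} : Set (Polynomial ℤ))) g) *
      (Ideal.Quotient.mk _ h) = 1 := by
    rw [← map_mul, ← map_one (Ideal.Quotient.mk (Ideal.span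
      ({X ^ (p : ℕ) - 1} : Set (Polynomial ℤ)))), Ideal.Quotient.mk_eq_mk_iff_sub_mem,
      Ideal.mem_span_singleton]
    exact hdvd3
  refine ⟨⟨Ideal.Quotient.mk _ g, Ideal.Quotient.mk _ h, hmul, by rwa [mul_comm] at hmul⟩, ?_⟩
  apply Subtype.ext
  show ((ev (Ideal.Quotient.mk _ g) : Algebra.adjoin ℤ ({ζ} : Set (CyclotomicField p ℚ))) :
    CyclotomicField p ℚ) = _
  rw [key g, hgζ]
  push_cast
  rfl
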